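/- Let X and Y be non-negative i.i.d. random variables whose common distribution is absolutely continuous with density f and distribution function F, and suppose the failure rate function t ↦ f(t)/(1 − F(t)) is monotone on [0, ∞). Then |X − Y| and 2·min(X,Y) are identically distributed if and only if there exists λ > 0 such that F(x) = 1 − e^{−λx} for x ≥ 0. -/

import Mathlib

open MeasureTheory ProbabilityTheory Set Filter Topology

namespace AhsanAux


lemma min_set_eq (t : ℝ) :
    {p : ℝ × ℝ | t < 2 * min p.1 p.2} = Ioi (t/2) ×ˢ Ioi (t/2) := by
  ext p
  simp only [mem_setOf_eq, mem_prod, mem_Ioi, div_lt_iff₀ (two_pos : (0:ℝ) < 2)]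
  rcases le_total p.1 p.2 with h | h
  · rw [min_eq_left h]; constructor
    · intro h'; constructor <;> nlinarith
    · intro ⟨h1, _⟩; linarith
  · rw [min_eq_right h]; constructor
    · intro h'; constructor <;> nlinarith
    · intro ⟨_, h2⟩; linarith

variable {μ : Measure ℝ} [SFinite μ]

lemma slice_apply (t : ℝ) :
    (μ.prod μ) {p : ℝ × ℝ | p.1 + t < p.2} = ∫⁻ x, μ (Ioi (x + t)) ∂μ := by
  rw [Measure.prod_apply (measurableSet_lt (by fun_prop) (by fun_prop))]
  rfl

lemma swap_slice (t : ℝ) :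
    (μ.prod μ) {p : ℝ × ℝ | p.2 + t < p.1} = ∫⁻ x, μ (Ioi (x + t)) ∂μ := by
  rw [← slice_apply t]
  have h1 : {p : ℝ × ℝ | p.2 + t < p.1} = Prod.swap ⁻¹' {p : ℝ × ℝ | p.1 + t < p.2} := rfl
  rw [h1, ← Measure.map_apply measurable_swap
    (measurableSet_lt (by fun_prop) (by fun_prop)), Measure.prod_swap]

lemma abs_set_eq {t : ℝ} (ht : 0 ≤ t) :
    {p : ℝ × ℝ | t < |p.1 - p.2|} =
      {p : ℝ × ℝ | p.2 + t < p.1} ∪ {p : ℝ × ℝ | p.1 + t < p.2} := by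
  ext p
  simp only [mem_setOf_eq, mem_union, lt_abs]
  constructor
  · rintro (h | h)
    · left; linarith
    · right; linarith
  · rintro (h | h)
    · left; linarith
    · right; linarith

lemma abs_disjoint {t : ℝ} (ht : 0 ≤ t) :
    Disjoint {p : ℝ × ℝ | p.2 + t < p.1} {p : ℝ × ℝ | p.1 + t < p.2} := by
  rw [Set.disjoint_left]
  rintro ⟨a, b⟩ h1 h2
  simp only [mem_setOf_eq] at h1 h2
  linarith

lemma abs_apply {t : ℝ} (ht : 0 ≤ t) :
    (μ.prod μ) {p : ℝ × ℝ | t < |p.1 - p.2|} = 2 * ∫⁻ x, μ (Ioi (x + t)) ∂μ := by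
  rw [abs_set_eq ht, measure_union (abs_disjoint ht)
    (measurableSet_lt (by fun_prop) (by fun_prop)), slice_apply, swap_slice, two_mul]

lemma min_apply (t : ℝ) :
    (μ.prod μ) {p : ℝ × ℝ | t < 2 * min p.1 p.2} = μ (Ioi (t/2)) * μ (Ioi (t/2)) := by
  rw [min_set_eq, Measure.prod_prod]

lemma half_lemma [IsProbabilityMeasure μ] (hat : ∀ x : ℝ, μ {x} = 0) :
    ∫⁻ x, μ (Ioi x) ∂μ = 1/2 := by
  set S1 : Set (ℝ × ℝ) := {p : ℝ × ℝ | p.1 < p.2} with hS1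
  set S2 : Set (ℝ × ℝ) := {p : ℝ × ℝ | p.2 < p.1} with hS2
  set D : Set (ℝ × ℝ) := {p : ℝ × ℝ | p.1 = p.2} with hD
  have mS1 : MeasurableSet S1 := measurableSet_lt (by fun_prop) (by fun_prop)
  have mS2 : MeasurableSet S2 := measurableSet_lt (by fun_prop) (by fun_prop)
  have mD : MeasurableSet D := measurableSet_eq_fun (by fun_prop) (by fun_prop)
  have h1 : (μ.prod μ) {p : ℝ × ℝ | p.1 + 0 < p.2} = ∫⁻ x, μ (Ioi (x + 0)) ∂μ := slice_apply 0
  have h2 : (μ.prod μ) {p : ℝ × ℝ | p.2 + 0 < p.1} = ∫⁻ x, μ (Ioi (x + 0)) ∂μ := swap_slice 0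
  simp only [add_zero] at h1 h2
  have h1' : (μ.prod μ) S1 = ∫⁻ x, μ (Ioi x) ∂μ := h1
  have h2' : (μ.prod μ) S2 = ∫⁻ x, μ (Ioi x) ∂μ := h2
  have hdiag : (μ.prod μ) D = 0 := by
    rw [Measure.prod_apply mD]
    have : ∀ x : ℝ, μ (Prod.mk x ⁻¹' D) = 0 := by
      intro x
      have hpre : (Prod.mk x ⁻¹' D) = {x} := by ext y; simp [hD, eq_comm]
      rw [hpre]; exact hat x
    simp only [this, lintegral_zero]
  have huniv : S1 ∪ (S2 ∪ D) = univ := by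
    ext p; simp only [hS1, hS2, hD, mem_union, mem_setOf_eq, mem_univ, iff_true]
    rcases lt_trichotomy p.1 p.2 with h | h | h
    · exact Or.inl h
    · exact Or.inr (Or.inr h)
    · exact Or.inr (Or.inl h)
  have hd1 : Disjoint S1 (S2 ∪ D) := by
    rw [Set.disjoint_left]
    rintro ⟨a, b⟩ ha hb
    have ha' : a < b := ha
    rcases hb with h | h
    · exact absurd ha' (not_lt.2 (le_of_lt h))
    · have h' : a = b := h
      exact absurd ha' (not_lt.2 (le_of_eq h'.symm))
  have hd2 : Disjoint S2 D := by
    rw [Set.disjoint_left]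
    rintro ⟨a, b⟩ ha hb
    have ha' : b < a := ha
    have hb' : a = b := hb
    exact absurd ha' (not_lt.2 (le_of_eq hb'))
  have htot := measure_union (μ := μ.prod μ) hd1 (mS2.union mD)
  rw [huniv, measure_union (μ := μ.prod μ) hd2 mD, hdiag, add_zero, h1', h2',
    measure_univ] at htot
  have h2I : 2 * ∫⁻ x, μ (Ioi x) ∂μ = 1 := by rw [two_mul]; exact htot.symm
  rw [ENNReal.eq_div_iff (by norm_num) (by norm_num), h2I]



lemma intervalIntegrable_of_bdd {k : ℝ → ℝ} (hm : Measurable k) {a b C : ℝ}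
    (hC : ∀ u ∈ uIcc a b, |k u| ≤ C) : IntervalIntegrable k volume a b := by
  rw [intervalIntegrable_iff]
  apply Measure.integrableOn_of_bounded (M := C)
  · exact (measure_Ioc_lt_top).ne
  · exact hm.aestronglyMeasurable
  · refine (ae_restrict_mem measurableSet_Ioc).mono fun u hu => ?_
    exact hC u (Ioc_subset_Icc_self hu)

variable {μ : Measure ℝ} [IsProbabilityMeasure μ]

lemma forward_main (f : ℝ → ℝ)
    (hdens : μ = volume.withDensity (fun x => ENNReal.ofReal (f x)))
    (h0 : μ (Iio 0) = 0)
    (hfail : MonotoneOn (fun t => f t / (1 - (μ (Iic t)).toReal)) (Ici 0) ∨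
      AntitoneOn (fun t => f t / (1 - (μ (Iic t)).toReal)) (Ici 0))
    (heq : ∀ t : ℝ, 0 ≤ t →
      2 * ∫⁻ x, μ (Ioi (x + t)) ∂μ = μ (Ioi (t/2)) * μ (Ioi (t/2)))
    (hhalf : ∫⁻ x, μ (Ioi x) ∂μ = 1/2) :
    ∃ l : ℝ, 0 < l ∧ ∀ x : ℝ, 0 ≤ x →
      μ (Iic x) = ENNReal.ofReal (1 - Real.exp (-l * x)) := by
  -- basic measure facts
  have habs : μ ≪ volume := by rw [hdens]; exact withDensity_absolutelyContinuous _ _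
  have hat : ∀ x : ℝ, μ {x} = 0 := fun x => habs (Real.volume_singleton)
  have hIic0 : μ (Iic 0) = 0 := by
    rw [← Set.Iio_union_right]
    exact measure_union_null h0 (hat 0)
  have hIoi0 : μ (Ioi 0) = 1 := by
    have := measure_compl (measurableSet_Iic (a := (0:ℝ))) (measure_ne_top μ _)
    rw [compl_Iic] at this
    rw [this, hIic0, measure_univ, tsub_zero]
  have haeX : ∀ᵐ x ∂μ, 0 ≤ x := by
    rw [ae_iff]
    convert h0 using 2
    ext x; simp [not_le]
  -- survival function
  set g : ℝ → ℝ := fun t => (μ (Ioi t)).toReal with hgdef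
  have hgE : ∀ t, μ (Ioi t) = ENNReal.ofReal (g t) := fun t =>
    (ENNReal.ofReal_toReal (measure_ne_top μ _)).symm
  have hganti : Antitone g := fun s t hst =>
    ENNReal.toReal_mono (measure_ne_top μ _) (measure_mono (Ioi_subset_Ioi hst))
  have hgm : Measurable g := hganti.measurable
  have hg0 : g 0 = 1 := by rw [hgdef]; simp [hIoi0]
  have hgnn : ∀ t, 0 ≤ g t := fun t => ENNReal.toReal_nonneg
  have hgle1 : ∀ t, g t ≤ 1 := fun t => by
    rw [hgdef]
    exact ENNReal.toReal_le_of_le_ofReal zero_le_one (by simpa using prob_le_one)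
  -- positivity of the survival function on [0, ∞)
  have hkey : ∀ t : ℝ, 0 ≤ t → μ (Ioi t) = 0 → μ (Ioi (t/2)) = 0 := by
    intro t ht hz
    have hint : ∫⁻ x, μ (Ioi (x + t)) ∂μ = 0 := by
      have : ∀ᵐ x ∂μ, μ (Ioi (x + t)) = 0 := by
        filter_upwards [haeX] with x hx
        exact le_antisymm (le_trans (measure_mono (Ioi_subset_Ioi (by linarith))) hz.le)
          (zero_le)
      rw [lintegral_congr_ae this, lintegral_zero]
    have := heq t ht
    rw [hint, mul_zero] at this
    exact (mul_self_eq_zero).1 this.symm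
  have hpos : ∀ t : ℝ, 0 ≤ t → μ (Ioi t) ≠ 0 := by
    intro t ht hz
    have hn : ∀ n : ℕ, μ (Ioi (t / 2 ^ n)) = 0 := by
      intro n
      induction n with
      | zero => simpa using hz
      | succ n ih =>
        have : t / 2 ^ (n + 1) = (t / 2 ^ n) / 2 := by ring
        rw [this]
        exact hkey _ (by positivity) ih
    rcases eq_or_lt_of_le ht with rfl | ht'
    · rw [hz] at hIoi0; exact one_ne_zero hIoi0.symm
    have hsub : Ioi (0:ℝ) ⊆ ⋃ n : ℕ, Ioi (t / 2 ^ n) := by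
      intro x hx
      have hx' : (0:ℝ) < x := hx
      obtain ⟨n, hn'⟩ := exists_pow_lt_of_lt_one (div_pos hx' ht') (by norm_num : (1:ℝ)/2 < 1)
      refine mem_iUnion.2 ⟨n, ?_⟩
      have h2 : (0:ℝ) < 2 ^ n := by positivity
      simp only [mem_Ioi]
      rw [lt_div_iff₀ ht'] at hn'
      calc t / 2 ^ n = (1/2 : ℝ) ^ n * t := by rw [one_div_pow]; field_simp
        _ < x := hn'

    have : μ (Ioi (0:ℝ)) = 0 :=
      measure_mono_null hsub (measure_iUnion_null fun n => hn n)
    rw [hIoi0] at this; exact one_ne_zero this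
  have hgpos : ∀ t : ℝ, 0 ≤ t → 0 < g t := fun t ht =>
    ENNReal.toReal_pos (hpos t ht) (measure_ne_top μ _)
  -- the hazard rate, clamped
  set q : ℝ → ℝ := fun t => max (f (max t 0) / (1 - (μ (Iic (max t 0))).toReal)) 0 with hqdef
  have hq0 : ∀ t, 0 ≤ q t := fun t => le_max_right _ _
  have hFg : ∀ t : ℝ, 1 - (μ (Iic t)).toReal = g t := by
    intro t
    have hc := measure_compl (measurableSet_Iic (a := t)) (measure_ne_top μ _)
    rw [compl_Iic, measure_univ] at hc
    rw [hgdef]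
    simp only
    rw [hc, ENNReal.toReal_sub_of_le (by simpa using prob_le_one) (by simp)]
    simp
  have hqmono : Monotone q ∨ Antitone q := by
    rcases hfail with hmono | hanti
    · left
      intro s t hst
      exact max_le_max (hmono (le_max_right s 0) (le_max_right t 0)
        (max_le_max hst le_rfl)) le_rfl
    · right
      intro s t hst
      exact max_le_max (hanti (le_max_right s 0) (le_max_right t 0)
        (max_le_max hst le_rfl)) le_rfl
  have hqm : Measurable q := by
    rcases hqmono with h | h
    · exact h.measurable
    · exact h.measurable
  have hfac : ∀ u : ℝ, 0 ≤ u →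
      ENNReal.ofReal (f u) = ENNReal.ofReal (q u * g u) := by
    intro u hu
    have hmax : max u 0 = u := max_eq_left hu
    have hq : q u = max (f u / g u) 0 := by rw [hqdef]; simp only [hmax, hFg]
    have hgu : 0 < g u := hgpos u hu
    rcases le_or_gt (f u) 0 with hf | hf
    · have : q u = 0 := by
        rw [hq, max_eq_right]
        exact div_nonpos_of_nonpos_of_nonneg hf hgu.le
      rw [this, zero_mul]
      rw [ENNReal.ofReal_eq_zero.2 hf, ENNReal.ofReal_zero]
    · have : q u = f u / g u := by
        rw [hq, max_eq_left]
        positivity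
      rw [this, div_mul_cancel₀ _ hgu.ne']
  -- the basic integral identity
  have hbd : ∀ a b : ℝ, ∃ C, ∀ u ∈ uIcc a b, |q u * g u| ≤ C ∧ |q u| ≤ C := by
    intro a b
    refine ⟨max (q (min a b)) (q (max a b)), fun u hu => ?_⟩
    have h1 : min a b ≤ u := hu.1
    have h2 : u ≤ max a b := hu.2
    have hqu : q u ≤ max (q (min a b)) (q (max a b)) := by
      rcases hqmono with h | h
      · exact le_max_of_le_right (h h2)
      · exact le_max_of_le_left (h h1)
    constructor
    · rw [abs_of_nonneg (mul_nonneg (hq0 u) (hgnn u))]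
      calc q u * g u ≤ q u * 1 := by
            exact mul_le_mul_of_nonneg_left (hgle1 u) (hq0 u)
        _ ≤ _ := by rw [mul_one]; exact hqu
    · rw [abs_of_nonneg (hq0 u)]; exact hqu
  have hkint : ∀ a b : ℝ, IntervalIntegrable (fun u => q u * g u) volume a b := by
    intro a b
    obtain ⟨C, hC⟩ := hbd a b
    exact intervalIntegrable_of_bdd (hqm.mul hgm) (fun u hu => (hC u hu).1)
  have hqint : ∀ a b : ℝ, IntervalIntegrable q volume a b := by
    intro a b
    obtain ⟨C, hC⟩ := hbd a b
    exact intervalIntegrable_of_bdd hqm (fun u hu => (hC u hu).2)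
  have claim1 : ∀ t : ℝ, 0 ≤ t → g t = 1 - ∫ u in (0:ℝ)..t, q u * g u := by
    intro t ht
    have hIoc : μ (Ioc 0 t) = μ (Ioi 0) - μ (Ioi t) := by
      rw [← Ioi_diff_Ioi]
      exact measure_diff (Ioi_subset_Ioi ht) measurableSet_Ioi.nullMeasurableSet
        (measure_ne_top μ _)
    have htr : (μ (Ioc 0 t)).toReal = 1 - g t := by
      rw [hIoc, ENNReal.toReal_sub_of_le (measure_mono (Ioi_subset_Ioi ht)) (measure_ne_top μ _),
        hIoi0]
      simp [hgdef]
    have hli : μ (Ioc 0 t) = ∫⁻ u in Ioc 0 t, ENNReal.ofReal (f u) ∂volume := by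
      conv_lhs => rw [hdens]
      exact withDensity_apply _ measurableSet_Ioc
    have hli2 : μ (Ioc 0 t) = ∫⁻ u in Ioc 0 t, ENNReal.ofReal (q u * g u) ∂volume := by
      rw [hli]
      refine lintegral_congr_ae ?_
      filter_upwards [ae_restrict_mem measurableSet_Ioc] with u hu
      exact hfac u hu.1.le
    have hint : IntegrableOn (fun u => q u * g u) (Ioc 0 t) volume := by
      have := (hkint 0 t)
      rw [intervalIntegrable_iff, uIoc_of_le ht] at this
      exact this
    have hli3 : μ (Ioc 0 t) = ENNReal.ofReal (∫ u in Ioc 0 t, q u * g u ∂volume) := by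
      rw [hli2, ← ofReal_integral_eq_lintegral_ofReal hint]
      exact (ae_restrict_mem measurableSet_Ioc).mono fun u _ =>
        mul_nonneg (hq0 u) (hgnn u)
    have hIpos : 0 ≤ ∫ u in Ioc 0 t, q u * g u ∂volume :=
      integral_nonneg fun u => mul_nonneg (hq0 u) (hgnn u)
    have : (μ (Ioc 0 t)).toReal = ∫ u in Ioc 0 t, q u * g u ∂volume := by
      rw [hli3, ENNReal.toReal_ofReal hIpos]
    rw [htr] at this
    rw [intervalIntegral.integral_of_le ht, ← this]
    ring
  -- the integral representation of the survival function
  set g₂ : ℝ → ℝ := fun t => 1 - ∫ u in (0:ℝ)..t, q u * g u with hg2def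
  have hg2eq : ∀ t : ℝ, 0 ≤ t → g t = g₂ t := claim1
  have hg2cont : Continuous g₂ :=
    continuous_const.sub (intervalIntegral.continuous_primitive hkint 0)
  set k₂ : ℝ → ℝ := fun u => q u * g₂ u with hk2def
  have hk2int : ∀ a b : ℝ, IntervalIntegrable k₂ volume a b := fun a b =>
    (hqint a b).mul_continuousOn hg2cont.continuousOn
  have claim2 : ∀ t : ℝ, 0 ≤ t → g₂ t = 1 - ∫ u in (0:ℝ)..t, k₂ u := by
    intro t ht
    rw [hg2def]
    simp only
    congr 1
    refine intervalIntegral.integral_congr fun u hu => ?_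
    rw [uIcc_of_le ht] at hu
    rw [hk2def]
    simp only
    rw [hg2eq u hu.1]
  set Q : ℝ → ℝ := fun t => ∫ u in (0:ℝ)..t, q u with hQdef
  have hQcont : Continuous Q := intervalIntegral.continuous_primitive hqint 0
  have hqten : ∀ b : ℝ, Tendsto q (𝓝[>] b) (𝓝 (Function.rightLim q b)) := by
    rcases hqmono with h | h
    · exact fun b => h.tendsto_rightLim b
    · exact fun b => h.tendsto_rightLim b
  have hsmf : ∀ b : ℝ, StronglyMeasurableAtFilter q (𝓝[>] b) volume :=
    fun b => ⟨univ, univ_mem, hqm.stronglyMeasurable.aestronglyMeasurable.restrict⟩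
  have hQd : ∀ b : ℝ, HasDerivWithinAt Q (Function.rightLim q b) (Ici b) b := by
    intro b
    exact intervalIntegral.integral_hasDerivWithinAt_of_tendsto_ae_right (hqint 0 b)
      (hsmf b) ((hqten b).mono_left inf_le_left)
  have hsmf2 : ∀ b : ℝ, StronglyMeasurableAtFilter k₂ (𝓝[>] b) volume :=
    fun b => ⟨univ, univ_mem,
      (hqm.mul (hg2cont.measurable)).stronglyMeasurable.aestronglyMeasurable.restrict⟩
  have hG2d : ∀ b : ℝ, 0 ≤ b →
      HasDerivWithinAt g₂ (-(Function.rightLim q b * g₂ b)) (Ici b) b := by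
    intro b hb
    have hten : Tendsto k₂ (𝓝[>] b) (𝓝 (Function.rightLim q b * g₂ b)) :=
      (hqten b).mul ((hg2cont.tendsto b).mono_left nhdsWithin_le_nhds)
    have hprim : HasDerivWithinAt (fun t => ∫ u in (0:ℝ)..t, k₂ u)
        (Function.rightLim q b * g₂ b) (Ici b) b :=
      intervalIntegral.integral_hasDerivWithinAt_of_tendsto_ae_right (hk2int 0 b)
        (hsmf2 b) (hten.mono_left inf_le_left)
    have h1 : HasDerivWithinAt (fun t => 1 - ∫ u in (0:ℝ)..t, k₂ u)
        (-(Function.rightLim q b * g₂ b)) (Ici b) b := by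
      have h := (hasDerivWithinAt_const b (Ici b) (1:ℝ)).sub hprim
      rw [zero_sub] at h
      exact h
    refine h1.congr (fun x hx => ?_) ?_
    · exact claim2 x (le_trans hb hx)
    · exact claim2 b hb
  set H : ℝ → ℝ := fun t => g₂ t * Real.exp (Q t) with hHdef
  have hHcont : Continuous H := hg2cont.mul (Real.continuous_exp.comp hQcont)
  have hHd : ∀ b : ℝ, 0 ≤ b → HasDerivWithinAt H 0 (Ici b) b := by
    intro b hb
    have := (hG2d b hb).mul ((hQd b).exp)
    have h' : HasDerivWithinAt H (-(Function.rightLim q b * g₂ b) * Real.exp (Q b) +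
        g₂ b * (Real.exp (Q b) * Function.rightLim q b)) (Ici b) b := this
    convert h' using 1
    ring
  have hH1 : ∀ t : ℝ, 0 ≤ t → H t = 1 := by
    intro t ht
    have hH0 : H 0 = 1 := by
      have hQ0 : Q 0 = 0 := intervalIntegral.integral_same
      have hg20 : g₂ 0 = 1 := by rw [hg2def]; simp [intervalIntegral.integral_same]
      rw [hHdef]
      simp only
      rw [hQ0, hg20, Real.exp_zero, one_mul]
    have := constant_of_has_deriv_right_zero (f := H) (a := 0) (b := t)
      (hHcont.continuousOn) (fun x hx => hHd x hx.1) t (by constructor <;> linarith)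
    rw [this, hH0]
  have hgexp : ∀ t : ℝ, 0 ≤ t → g t = Real.exp (-Q t) := by
    intro t ht
    have h1 := hH1 t ht
    rw [hHdef] at h1
    simp only at h1
    have hexpne : Real.exp (Q t) ≠ 0 := (Real.exp_pos _).ne'
    rw [hg2eq t ht, Real.exp_neg]
    field_simp
    linarith [h1]
  -- additivity of Q over adjacent intervals and shift comparison
  have hQadd : ∀ s t : ℝ, Q s + ∫ u in s..(s+t), q u = Q (s + t) := by
    intro s t
    exact intervalIntegral.integral_add_adjacent_intervals (hqint 0 s) (hqint s (s+t))
  have hshift : ∀ s t : ℝ, ∫ u in (0:ℝ)..t, q (s + u) = ∫ u in s..(s+t), q u := by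
    intro s t
    rw [intervalIntegral.integral_comp_add_left q s, add_zero]
  have heq2 : ∀ t : ℝ, 0 ≤ t →
      2 * ∫⁻ x, μ (Ioi (x + 2*t)) ∂μ = μ (Ioi t) * μ (Ioi t) := by
    intro t ht
    have := heq (2*t) (by linarith)
    rwa [show (2*t)/2 = t by ring] at this
  have hEmeas : Measurable fun x : ℝ => μ (Ioi x) := by
    have : (fun x : ℝ => μ (Ioi x)) = fun x => ENNReal.ofReal (g x) := funext fun x => hgE x
    rw [this]
    exact ENNReal.measurable_ofReal.comp hgm
  -- sandwich: in both monotone cases we get the multiplicative relation at doubling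
  have hEE : ∀ t : ℝ, 0 ≤ t → μ (Ioi (2*t)) = μ (Ioi t) * μ (Ioi t) := by
    have hhalf2 : (2 : ENNReal) * ∫⁻ x, μ (Ioi x) ∂μ = 1 := by
      rw [hhalf, one_div]
      exact ENNReal.mul_inv_cancel two_ne_zero (by norm_num)
    rcases hqmono with hmono | hanti
    · -- increasing failure rate: NBU
      have hQsuper : ∀ s t : ℝ, 0 ≤ s → 0 ≤ t → Q t + Q s ≤ Q (s + t) := by
        intro s t hs ht
        have hcmp : ∫ u in (0:ℝ)..t, q u ≤ ∫ u in (0:ℝ)..t, q (s + u) := by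
          apply intervalIntegral.integral_mono_on ht (hqint 0 t)
            ((hmono.comp (show Monotone fun u : ℝ => s + u by intro u v huv; simpa using huv)).intervalIntegrable)
          intro u hu
          exact hmono (show u ≤ s + u by linarith)
        have := hshift s t
        have h2 := hQadd s t
        have : Q t ≤ Q (s + t) - Q s := by
          rw [← h2]; simp only [add_sub_cancel_left]
          rw [← this]; exact hcmp
        linarith
      intro t ht
      refine le_antisymm ?_ ?_
      · -- μ (Ioi (2t)) ≤ μ (Ioi t)^2
        rw [hgE (2*t), hgE t, ← ENNReal.ofReal_mul (hgnn _)]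
        apply ENNReal.ofReal_le_ofReal
        rw [hgexp (2*t) (by linarith), hgexp t ht, ← Real.exp_add]
        apply Real.exp_le_exp.2
        have := hQsuper t t ht ht
        rw [show t + t = 2*t by ring] at this
        linarith
      · rw [← heq2 t ht]
        have hub : ∀ᵐ x ∂μ, μ (Ioi (x + 2*t)) ≤ μ (Ioi (2*t)) * μ (Ioi x) := by
          filter_upwards [haeX] with x hx
          rw [hgE (x+2*t), hgE (2*t), hgE x, ← ENNReal.ofReal_mul (hgnn _)]
          apply ENNReal.ofReal_le_ofReal
          rw [hgexp (x+2*t) (by linarith), hgexp (2*t) (by linarith), hgexp x hx,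
            ← Real.exp_add]
          apply Real.exp_le_exp.2
          have := hQsuper x (2*t) hx (by linarith)
          linarith
        calc 2 * ∫⁻ x, μ (Ioi (x + 2*t)) ∂μ
            ≤ 2 * ∫⁻ x, μ (Ioi (2*t)) * μ (Ioi x) ∂μ :=
              mul_le_mul_right (lintegral_mono_ae hub) 2
          _ = μ (Ioi (2*t)) * (2 * ∫⁻ x, μ (Ioi x) ∂μ) := by
              rw [lintegral_const_mul _ hEmeas]; ring
          _ = μ (Ioi (2*t)) := by rw [hhalf2, mul_one]
    · -- decreasing failure rate: NWU
      have hQsub : ∀ s t : ℝ, 0 ≤ s → 0 ≤ t → Q (s + t) ≤ Q t + Q s := by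
        intro s t hs ht
        have hcmp : ∫ u in (0:ℝ)..t, q (s + u) ≤ ∫ u in (0:ℝ)..t, q u := by
          apply intervalIntegral.integral_mono_on ht
            ((hanti.comp_monotone (show Monotone fun u : ℝ => s + u by intro u v huv; simpa using huv)).intervalIntegrable)
            (hqint 0 t)
          intro u hu
          exact hanti (show u ≤ s + u by linarith)
        have := hshift s t
        have h2 := hQadd s t
        have : Q (s + t) - Q s ≤ Q t := by
          rw [← h2]; simp only [add_sub_cancel_left]
          rw [← this]; exact hcmp
        linarith
      intro t ht
      refine le_antisymm ?_ ?_
      · rw [← heq2 t ht]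
        have hub : ∀ᵐ x ∂μ, μ (Ioi (2*t)) * μ (Ioi x) ≤ μ (Ioi (x + 2*t)) := by
          filter_upwards [haeX] with x hx
          rw [hgE (x+2*t), hgE (2*t), hgE x, ← ENNReal.ofReal_mul (hgnn _)]
          apply ENNReal.ofReal_le_ofReal
          rw [hgexp (x+2*t) (by linarith), hgexp (2*t) (by linarith), hgexp x hx,
            ← Real.exp_add]
          apply Real.exp_le_exp.2
          have := hQsub x (2*t) hx (by linarith)
          linarith
        calc μ (Ioi (2*t))
            = μ (Ioi (2*t)) * (2 * ∫⁻ x, μ (Ioi x) ∂μ) := by rw [hhalf2, mul_one]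
          _ = 2 * ∫⁻ x, μ (Ioi (2*t)) * μ (Ioi x) ∂μ := by
              rw [lintegral_const_mul _ hEmeas]; ring
          _ ≤ 2 * ∫⁻ x, μ (Ioi (x + 2*t)) ∂μ :=
              mul_le_mul_right (lintegral_mono_ae hub) 2
      · rw [hgE (2*t), hgE t, ← ENNReal.ofReal_mul (hgnn _)]
        apply ENNReal.ofReal_le_ofReal
        rw [hgexp (2*t) (by linarith), hgexp t ht, ← Real.exp_add]
        apply Real.exp_le_exp.2
        have := hQsub t t ht ht
        rw [show t + t = 2*t by ring] at this
        linarith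
  -- the doubling identity for Q
  have hQ2 : ∀ t : ℝ, 0 ≤ t → Q (2*t) = 2 * Q t := by
    intro t ht
    have h := hEE t ht
    rw [hgE (2*t), hgE t, ← ENNReal.ofReal_mul (hgnn _)] at h
    have hg : g (2*t) = g t * g t := by
      rw [← ENNReal.ofReal_eq_ofReal_iff (hgnn _) (mul_nonneg (hgnn _) (hgnn _))]
      exact h
    rw [hgexp (2*t) (by linarith), hgexp t ht, ← Real.exp_add] at hg
    have := Real.exp_injective hg
    linarith
  have hsplitq : ∀ t : ℝ, 0 ≤ t → ∫ u in t..(2*t), q u = Q t := by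
    intro t ht
    have h1 := hQadd t t
    rw [show t + t = 2*t by ring] at h1
    have h2 := hQ2 t ht
    linarith
  -- constancy of q on (0, ∞)
  have hqconst : ∀ a b : ℝ, 0 < a → 0 < b → a ≤ b → q a = q b := by
    intro a b ha hb hab
    have hQb : Q b = (∫ u in (0:ℝ)..a, q u) + ∫ u in a..b, q u :=
      (intervalIntegral.integral_add_adjacent_intervals (hqint 0 a) (hqint a b)).symm
    have hbQ : ∫ u in b..(2*b), q u = Q b := hsplitq b hb.le
    rcases hqmono with hmono | hanti
    · refine le_antisymm (hmono hab) (not_lt.1 fun hlt => ?_)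
      have i1 : ∫ u in (0:ℝ)..a, q u ≤ a * q a := by
        calc ∫ u in (0:ℝ)..a, q u ≤ ∫ u in (0:ℝ)..a, q a :=
              intervalIntegral.integral_mono_on ha.le (hqint 0 a)
                intervalIntegrable_const (fun u hu => hmono hu.2)
          _ = a * q a := by simp [mul_comm]
      have i2 : ∫ u in a..b, q u ≤ (b - a) * q b := by
        calc ∫ u in a..b, q u ≤ ∫ u in a..b, q b :=
              intervalIntegral.integral_mono_on hab (hqint a b)
                intervalIntegrable_const (fun u hu => hmono hu.2)
          _ = (b - a) * q b := by simp [mul_comm]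
      have i3 : b * q b ≤ ∫ u in b..(2*b), q u := by
        calc (b : ℝ) * q b = ∫ u in b..(2*b), q b := by
              rw [intervalIntegral.integral_const, smul_eq_mul]; ring
          _ ≤ ∫ u in b..(2*b), q u :=
              intervalIntegral.integral_mono_on (by linarith) intervalIntegrable_const
                (hqint b (2*b)) (fun u hu => hmono hu.1)
      nlinarith
    · refine le_antisymm (not_lt.1 fun hlt => ?_) (hanti hab)
      have i1 : a * q a ≤ ∫ u in (0:ℝ)..a, q u := by
        calc (a : ℝ) * q a = ∫ u in (0:ℝ)..a, q a := by simp [mul_comm]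
          _ ≤ ∫ u in (0:ℝ)..a, q u :=
              intervalIntegral.integral_mono_on ha.le intervalIntegrable_const
                (hqint 0 a) (fun u hu => hanti hu.2)
      have i2 : (b - a) * q b ≤ ∫ u in a..b, q u := by
        calc (b - a) * q b = ∫ u in a..b, q b := by simp [mul_comm]
          _ ≤ ∫ u in a..b, q u :=
              intervalIntegral.integral_mono_on hab intervalIntegrable_const
                (hqint a b) (fun u hu => hanti hu.2)
      have i3 : ∫ u in b..(2*b), q u ≤ b * q b := by
        calc ∫ u in b..(2*b), q u ≤ ∫ u in b..(2*b), q b :=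
              intervalIntegral.integral_mono_on (by linarith) (hqint b (2*b))
                intervalIntegrable_const (fun u hu => hanti hu.1)
          _ = b * q b := by
              rw [intervalIntegral.integral_const, smul_eq_mul]; ring
      nlinarith
  have hql : ∀ u : ℝ, 0 < u → q u = q 1 := by
    intro u hu
    rcases le_total u 1 with h | h
    · exact hqconst u 1 hu one_pos h
    · exact (hqconst 1 u one_pos hu h).symm
  have hQlin : ∀ t : ℝ, 0 ≤ t → Q t = q 1 * t := by
    intro t ht
    rcases eq_or_lt_of_le ht with rfl | ht'
    · simp [hQdef, intervalIntegral.integral_same]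
    · have hcong : ∫ u in (0:ℝ)..t, q u = ∫ u in (0:ℝ)..t, q 1 := by
        apply intervalIntegral.integral_congr_ae
        apply ae_of_all
        intro x
        intro hx
        rw [uIoc_of_le ht] at hx
        exact hql x hx.1
      calc Q t = ∫ u in (0:ℝ)..t, q 1 := hcong
        _ = q 1 * t := by simp [mul_comm]
  have hcpos : 0 < q 1 := by
    rcases (hq0 1).lt_or_eq with h | h
    · exact h
    · exfalso
      have hIone : ∀ t : ℝ, 0 ≤ t → μ (Ioi t) = 1 := by
        intro t ht
        rw [hgE, hgexp t ht, hQlin t ht, ← h, zero_mul, neg_zero, Real.exp_zero,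
          ENNReal.ofReal_one]
      have hIocz : ∀ n : ℕ, μ (Ioc 0 ((n:ℝ)+1)) = 0 := by
        intro n
        rw [← Ioi_diff_Ioi, measure_diff (Ioi_subset_Ioi (by positivity))
          measurableSet_Ioi.nullMeasurableSet (measure_ne_top μ _),
          hIone 0 le_rfl, hIone ((n:ℝ)+1) (by positivity), tsub_self]
      have hsub : Ioi (0:ℝ) ⊆ ⋃ n : ℕ, Ioc (0:ℝ) ((n:ℝ)+1) := by
        intro x hx
        obtain ⟨n, hn⟩ := exists_nat_ge x
        exact mem_iUnion.2 ⟨n, hx, by linarith⟩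
      have : μ (Ioi (0:ℝ)) = 0 :=
        measure_mono_null hsub (measure_iUnion_null hIocz)
      rw [hIoi0] at this
      exact one_ne_zero this
  refine ⟨q 1, hcpos, fun x hx => ?_⟩
  have hIic : μ (Iic x) = 1 - μ (Ioi x) := by
    rw [← compl_Ioi, measure_compl measurableSet_Ioi (measure_ne_top μ _), measure_univ]
  rw [hIic, hgE, hgexp x hx, hQlin x hx, neg_mul,
    ENNReal.ofReal_sub _ (Real.exp_nonneg _), ENNReal.ofReal_one]



lemma reverse_main {μ : Measure ℝ} [IsProbabilityMeasure μ]
    (h0 : μ (Iio 0) = 0) {l : ℝ} (hl : 0 < l)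
    (hexp : ∀ x : ℝ, 0 ≤ x → μ (Iic x) = ENNReal.ofReal (1 - Real.exp (-l * x)))
    (hhalf : ∫⁻ x, μ (Ioi x) ∂μ = 1/2) :
    ∀ t : ℝ, 0 ≤ t →
      2 * ∫⁻ x, μ (Ioi (x + t)) ∂μ = μ (Ioi (t/2)) * μ (Ioi (t/2)) := by
  have haeX : ∀ᵐ x ∂μ, 0 ≤ x := by
    rw [ae_iff]
    convert h0 using 2
    ext x; simp [not_le]
  have hE : ∀ s : ℝ, 0 ≤ s → μ (Ioi s) = ENNReal.ofReal (Real.exp (-l * s)) := by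
    intro s hs
    have h1 : μ (Ioi s) = 1 - μ (Iic s) := by
      rw [← compl_Iic, measure_compl measurableSet_Iic (measure_ne_top μ _), measure_univ]
    rw [h1, hexp s hs, ENNReal.ofReal_sub _ (Real.exp_nonneg _), ENNReal.ofReal_one,
      ENNReal.sub_sub_cancel (by norm_num) (ENNReal.ofReal_le_one.2 (Real.exp_le_one_iff.2 (by nlinarith)))]
  intro t ht
  have hrhs : μ (Ioi (t/2)) * μ (Ioi (t/2)) = ENNReal.ofReal (Real.exp (-l * t)) := by
    rw [hE (t/2) (by linarith), ← ENNReal.ofReal_mul (Real.exp_nonneg _), ← Real.exp_add]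
    congr 2
    ring
  have hint : ∫⁻ x, μ (Ioi (x + t)) ∂μ
      = ENNReal.ofReal (Real.exp (-l * t)) * ∫⁻ x, μ (Ioi x) ∂μ := by
    have hcong : ∫⁻ x, μ (Ioi (x + t)) ∂μ
        = ∫⁻ x, ENNReal.ofReal (Real.exp (-l * t)) * μ (Ioi x) ∂μ := by
      apply lintegral_congr_ae
      filter_upwards [haeX] with x hx
      rw [hE (x + t) (by linarith), hE x hx, ← ENNReal.ofReal_mul (Real.exp_nonneg _),
        ← Real.exp_add]
      congr 2
      ring
    rw [hcong]
    exact lintegral_const_mul' _ _ ENNReal.ofReal_ne_top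
  rw [hint, hhalf, hrhs]
  calc 2 * (ENNReal.ofReal (Real.exp (-l * t)) * (1/2))
      = ENNReal.ofReal (Real.exp (-l * t)) * ((1/2) * 2) := by ring
    _ = ENNReal.ofReal (Real.exp (-l * t)) := by
        rw [one_div, ENNReal.inv_mul_cancel two_ne_zero (by norm_num), mul_one]


end AhsanAux

open AhsanAux

/-- **Ahsanullah's characterization of the exponential law.** Let `X` and `Y` be
non-negative i.i.d. random variables with an absolutely continuous distribution, with
density `f` and distribution function `F`, whose failure rate `t ↦ f t / (1 - F t)` is
monotone on `[0, ∞)`. Then `|X - Y|` and `2 * min (X, Y)` are identically distributed iff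
`X` is exponentially distributed. -/
theorem ahsanullah_characterization_exponential
    {Ω : Type*} [MeasureSpace Ω] [IsProbabilityMeasure (ℙ : Measure Ω)]
    (X Y : Ω → ℝ) (hX : Measurable X) (hY : Measurable Y)
    (hindep : IndepFun X Y ℙ) (hid : Measure.map Y ℙ = Measure.map X ℙ)
    (hpos : ∀ᵐ ω ∂ℙ, 0 ≤ X ω)
    (f : ℝ → ℝ)
    (hdens : Measure.map X ℙ = volume.withDensity (fun x => ENNReal.ofReal (f x)))
    (F : ℝ → ℝ) (hF : F = fun x => ((Measure.map X ℙ) (Set.Iic x)).toReal)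
    (hfailure : MonotoneOn (fun t => f t / (1 - F t)) (Set.Ici (0 : ℝ)) ∨
      AntitoneOn (fun t => f t / (1 - F t)) (Set.Ici (0 : ℝ))) :
    Measure.map (fun ω => |X ω - Y ω|) ℙ
        = Measure.map (fun ω => 2 * min (X ω) (Y ω)) ℙ ↔
      ∃ l : ℝ, 0 < l ∧ ∀ x : ℝ, 0 ≤ x →
        (Measure.map X ℙ) (Set.Iic x) = ENNReal.ofReal (1 - Real.exp (-l * x)) := by
  subst hF
  set μ := Measure.map X ℙ with hμ
  haveI hPμ : IsProbabilityMeasure μ := Measure.isProbabilityMeasure_map hX.aemeasurable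
  have hjoint : Measure.map (fun ω => (X ω, Y ω)) ℙ = μ.prod μ := by
    rw [(ProbabilityTheory.indepFun_iff_map_prod_eq_prod_map_map hX.aemeasurable
      hY.aemeasurable).1 hindep, hid]
  have habs : μ ≪ volume := by rw [hdens]; exact withDensity_absolutelyContinuous _ _
  have hat : ∀ x : ℝ, μ {x} = 0 := fun x => habs Real.volume_singleton
  have h0 : μ (Iio 0) = 0 := by
    rw [hμ, Measure.map_apply hX measurableSet_Iio]
    rw [ae_iff] at hpos
    convert hpos using 2
    ext ω; simp [not_le]
  have hhalf := AhsanAux.half_lemma (μ := μ) hat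
  have hmabs_meas : Measurable fun p : ℝ × ℝ => |p.1 - p.2| := by fun_prop
  have hmmin_meas : Measurable fun p : ℝ × ℝ => 2 * min p.1 p.2 := by fun_prop
  have hmabs : Measure.map (fun ω => |X ω - Y ω|) ℙ
      = Measure.map (fun p : ℝ × ℝ => |p.1 - p.2|) (μ.prod μ) := by
    rw [← hjoint, Measure.map_map hmabs_meas (hX.prodMk hY)]
    rfl
  have hmmin : Measure.map (fun ω => 2 * min (X ω) (Y ω)) ℙ
      = Measure.map (fun p : ℝ × ℝ => 2 * min p.1 p.2) (μ.prod μ) := by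
    rw [← hjoint, Measure.map_map hmmin_meas (hX.prodMk hY)]
    rfl
  have habsIoi : ∀ t : ℝ, 0 ≤ t → Measure.map (fun ω => |X ω - Y ω|) ℙ (Ioi t)
      = 2 * ∫⁻ x, μ (Ioi (x + t)) ∂μ := by
    intro t ht
    rw [hmabs, Measure.map_apply hmabs_meas measurableSet_Ioi]
    exact AhsanAux.abs_apply ht
  have hminIoi : ∀ t : ℝ, Measure.map (fun ω => 2 * min (X ω) (Y ω)) ℙ (Ioi t)
      = μ (Ioi (t/2)) * μ (Ioi (t/2)) := by
    intro t
    rw [hmmin, Measure.map_apply hmmin_meas measurableSet_Ioi]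
    exact AhsanAux.min_apply t
  constructor
  · intro hmain
    have heq : ∀ t : ℝ, 0 ≤ t →
        2 * ∫⁻ x, μ (Ioi (x + t)) ∂μ = μ (Ioi (t/2)) * μ (Ioi (t/2)) := by
      intro t ht
      rw [← habsIoi t ht, hmain, hminIoi t]
    exact AhsanAux.forward_main f hdens h0 hfailure heq hhalf
  · rintro ⟨l, hl, hexp⟩
    have hrev := AhsanAux.reverse_main h0 hl hexp hhalf
    haveI h1 : IsProbabilityMeasure (Measure.map (fun ω => |X ω - Y ω|) ℙ) :=
      Measure.isProbabilityMeasure_map (by fun_prop)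
    haveI h2 : IsProbabilityMeasure (Measure.map (fun ω => 2 * min (X ω) (Y ω)) ℙ) :=
      Measure.isProbabilityMeasure_map (by fun_prop)
    have hIoi : ∀ t : ℝ, Measure.map (fun ω => |X ω - Y ω|) ℙ (Ioi t)
        = Measure.map (fun ω => 2 * min (X ω) (Y ω)) ℙ (Ioi t) := by
      intro t
      rcases le_or_gt 0 t with ht | ht
      · rw [habsIoi t ht, hminIoi t]
        exact hrev t ht
      · have hIci : μ (Ici (0:ℝ)) = 1 := by
          rw [← compl_Iio, measure_compl measurableSet_Iio (measure_ne_top μ _),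
            measure_univ, h0, tsub_zero]
        have hleft : Measure.map (fun ω => |X ω - Y ω|) ℙ (Ioi t) = 1 := by
          rw [hmabs, Measure.map_apply hmabs_meas measurableSet_Ioi]
          have : (fun p : ℝ × ℝ => |p.1 - p.2|) ⁻¹' (Ioi t) = univ := by
            ext p
            simp only [mem_preimage, mem_Ioi, mem_univ, iff_true]
            exact lt_of_lt_of_le ht (abs_nonneg _)
          rw [this, measure_univ]
        have hright : Measure.map (fun ω => 2 * min (X ω) (Y ω)) ℙ (Ioi t) = 1 := by
          rw [hmmin, Measure.map_apply hmmin_meas measurableSet_Ioi]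
          refine le_antisymm prob_le_one ?_
          have hsub : (Ici (0:ℝ) ×ˢ Ici (0:ℝ)) ⊆
              (fun p : ℝ × ℝ => 2 * min p.1 p.2) ⁻¹' (Ioi t) := by
            rintro ⟨x, y⟩ ⟨hx, hy⟩
            simp only [mem_preimage, mem_Ioi]
            have : (0:ℝ) ≤ min x y := le_min hx hy
            linarith
          calc (1 : ENNReal) = μ (Ici 0) * μ (Ici 0) := by rw [hIci, one_mul]
            _ = (μ.prod μ) (Ici (0:ℝ) ×ˢ Ici (0:ℝ)) := (Measure.prod_prod _ _).symm
            _ ≤ _ := measure_mono hsub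
        rw [hleft, hright]
    apply Measure.ext_of_Iic
    intro a
    have hcompl1 := measure_compl (μ := Measure.map (fun ω => |X ω - Y ω|) ℙ)
      (measurableSet_Ioi (a := a)) (measure_ne_top _ _)
    have hcompl2 := measure_compl (μ := Measure.map (fun ω => 2 * min (X ω) (Y ω)) ℙ)
      (measurableSet_Ioi (a := a)) (measure_ne_top _ _)
    rw [compl_Ioi] at hcompl1 hcompl2
    rw [hcompl1, hcompl2, hIoi a, measure_univ, measure_univ]
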